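/- For a symmetric multiple access channel W with independent uniform inputs X₁, …, X_c, the output Y is independent of (X₁, …, X_{c-1}) given the modulo sum X₁ + … + X_c; in particular I(Y; X₁,…,X_{c-1} | X₁+…+X_c) = 0. -/
import Mathlib


open scoped BigOperators

/-- Shannon entropy of a pmf on a finite type (natural log). -/
noncomputable def ent {α : Type*} [Fintype α] (p : α → ℝ) : ℝ :=
  -∑ a, p a * Real.log (p a)

/-- Conditional mutual information `I(X;Y|Z)` of a joint pmf on `α × β × γ`. -/
noncomputable def condMI {α β γ : Type*} [Fintype α] [Fintype β] [Fintype γ]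
    (p : α × β × γ → ℝ) : ℝ :=
  ent (fun ac : α × γ => ∑ b, p (ac.1, b, ac.2))
  + ent (fun bc : β × γ => ∑ a, p (a, bc.1, bc.2))
  - ent (fun c : γ => ∑ a, ∑ b, p (a, b, c))
  - ent p

lemma xlog_mul (a x : ℝ) (ha : 0 < a) (hx : 0 ≤ x) :
    x * Real.log (a * x) = x * Real.log a + x * Real.log x := by
  rcases hx.eq_or_lt with h | h
  · simp [← h]
  · rw [Real.log_mul ha.ne' h.ne']; ring

lemma sum_const_left {β γ : Type*} [Fintype β] [Fintype γ] (g : γ → ℝ) :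
    ∑ bc : β × γ, g bc.2 = (Fintype.card β : ℝ) * ∑ c, g c := by
  rw [Fintype.sum_prod_type]
  simp [Finset.sum_const, Finset.card_univ, nsmul_eq_mul]

lemma sum_const_mid {α β γ : Type*} [Fintype α] [Fintype β] [Fintype γ] (g : α × γ → ℝ) :
    ∑ x : α × β × γ, g (x.1, x.2.2) = (Fintype.card β : ℝ) * ∑ ac : α × γ, g ac := by
  calc ∑ x : α × β × γ, g (x.1, x.2.2)
      = ∑ a, ∑ bc : β × γ, g (a, bc.2) := Fintype.sum_prod_type _
    _ = ∑ a, (Fintype.card β : ℝ) * ∑ c, g (a, c) := by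
        exact Finset.sum_congr rfl fun a _ => sum_const_left (fun c => g (a, c))
    _ = (Fintype.card β : ℝ) * ∑ ac : α × γ, g ac := by
        rw [Fintype.sum_prod_type, Finset.mul_sum]

lemma condMI_indep {α β γ : Type*} [Fintype α] [Fintype β] [Fintype γ] [Nonempty β]
    (q : α × γ → ℝ) (hq : ∀ x, 0 ≤ q x) :
    condMI (fun abc : α × β × γ => (Fintype.card β : ℝ)⁻¹ * q (abc.1, abc.2.2)) = 0 := by
  have hB : (0:ℝ) < (Fintype.card β : ℝ) := by exact_mod_cast Fintype.card_pos
  set B : ℝ := (Fintype.card β : ℝ) with hBdef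
  have hBinv : 0 < B⁻¹ := inv_pos.mpr hB
  set r : γ → ℝ := fun c => ∑ a, q (a, c) with hrdef
  have hr0 : ∀ c, 0 ≤ r c := fun c => Finset.sum_nonneg fun a _ => hq _
  have hS : ∑ c, r c = ∑ ac : α × γ, q ac := by
    rw [Fintype.sum_prod_type]
    simp only [hrdef]
    exact Finset.sum_comm
  -- per-term splitting
  have key : ∀ (x : ℝ), 0 ≤ x → (B⁻¹ * x) * Real.log (B⁻¹ * x)
      = B⁻¹ * (x * Real.log B⁻¹ + x * Real.log x) := by
    intro x hx
    rw [mul_assoc, xlog_mul B⁻¹ x hBinv hx]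
  -- term 1
  have e1 : ent (fun ac : α × γ => ∑ _b : β, B⁻¹ * q (ac.1, ac.2)) = ent q := by
    congr 1
    funext ac
    rw [Finset.sum_const, Finset.card_univ, nsmul_eq_mul, ← hBdef, mul_inv_cancel_left₀ hB.ne']
  -- term 2
  have e2 : ent (fun bc : β × γ => ∑ a, B⁻¹ * q (a, bc.2))
      = -(Real.log B⁻¹ * ∑ ac : α × γ, q ac) + ent r := by
    have h0 : (fun bc : β × γ => ∑ a, B⁻¹ * q (a, bc.2))
        = fun bc : β × γ => B⁻¹ * r bc.2 := by
      funext bc; rw [← Finset.mul_sum]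
    rw [h0]
    unfold ent
    rw [sum_const_left (fun c => (B⁻¹ * r c) * Real.log (B⁻¹ * r c))]
    have : ∑ c, (B⁻¹ * r c) * Real.log (B⁻¹ * r c)
        = B⁻¹ * ∑ c, (r c * Real.log B⁻¹ + r c * Real.log (r c)) := by
      rw [Finset.mul_sum]
      exact Finset.sum_congr rfl fun c _ => key _ (hr0 c)
    rw [this, ← mul_assoc, mul_inv_cancel₀ hB.ne', one_mul, Finset.sum_add_distrib,
      ← Finset.sum_mul, hS]
    ring
  -- term 3
  have e3 : ent (fun c : γ => ∑ a, ∑ _b : β, B⁻¹ * q (a, c)) = ent r := by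
    congr 1
    funext c
    rw [hrdef]
    refine Finset.sum_congr rfl fun a _ => ?_
    rw [Finset.sum_const, Finset.card_univ, nsmul_eq_mul, ← hBdef, mul_inv_cancel_left₀ hB.ne']
  -- term 4
  have e4 : ent (fun abc : α × β × γ => B⁻¹ * q (abc.1, abc.2.2))
      = -(Real.log B⁻¹ * ∑ ac : α × γ, q ac) + ent q := by
    unfold ent
    rw [sum_const_mid (fun ac => (B⁻¹ * q ac) * Real.log (B⁻¹ * q ac))]
    have : ∑ ac : α × γ, (B⁻¹ * q ac) * Real.log (B⁻¹ * q ac)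
        = B⁻¹ * ∑ ac : α × γ, (q ac * Real.log B⁻¹ + q ac * Real.log (q ac)) := by
      rw [Finset.mul_sum]
      exact Finset.sum_congr rfl fun ac _ => key _ (hq ac)
    rw [this, ← mul_assoc, mul_inv_cancel₀ hB.ne', one_mul, Finset.sum_add_distrib,
      ← Finset.sum_mul]
    ring
  unfold condMI
  simp only []
  rw [e1, e2, e3, e4]
  ring

section channel

variable {V : Type*} [AddCommGroup V] {𝒴 : Type*} {c : ℕ}
variable (W : (Fin c → V) → 𝒴 → ℝ) (f : V → 𝒴 → 𝒴)

lemma W_move (hf : ∀ x x', f x ∘ f x' = f (x + x')) (hf0 : f 0 = id)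
    (hsym : ∀ (x : V) (i : Fin c) (xs : Fin c → V) (y : 𝒴),
      W xs (f x y) = W (Function.update xs i (xs i + x)) y)
    {i j : Fin c} (hij : i ≠ j) (xs : Fin c → V) (x : V) (y : 𝒴) :
    W xs y = W (Function.update (Function.update xs i (xs i + x)) j (xs j - x)) y := by
  have hfy : f x (f (-x) y) = y := by
    have h := congrFun (hf x (-x)) y
    simp only [Function.comp_apply] at h
    rw [h, add_neg_cancel, hf0, id]
  have h1 := hsym x i xs (f (-x) y)
  have h2 := hsym (-x) j (Function.update xs i (xs i + x)) y
  rw [Function.update_of_ne hij.symm] at h2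
  calc W xs y = W xs (f x (f (-x) y)) := by rw [hfy]
    _ = W (Function.update xs i (xs i + x)) (f (-x) y) := h1
    _ = W (Function.update (Function.update xs i (xs i + x)) j (xs j + -x)) y := h2
    _ = W (Function.update (Function.update xs i (xs i + x)) j (xs j - x)) y := by
        rw [sub_eq_add_neg]

lemma W_collect (hf : ∀ x x', f x ∘ f x' = f (x + x')) (hf0 : f 0 = id)
    (hsym : ∀ (x : V) (i : Fin c) (xs : Fin c → V) (y : 𝒴),
      W xs (f x y) = W (Function.update xs i (xs i + x)) y)
    (T : Finset (Fin c)) (j : Fin c) (hj : j ∉ T) (xs : Fin c → V) (y : 𝒴) :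
    W xs y = W (fun i => if i ∈ T then 0 else if i = j then xs j + ∑ t ∈ T, xs t else xs i) y := by
  induction T using Finset.induction_on generalizing xs with
  | empty =>
    congr 1
    funext i
    by_cases h : i = j <;> simp [h]
  | @insert a T ha ih =>
    have haj : a ≠ j := fun h => hj (h ▸ Finset.mem_insert_self a T)
    have hjT : j ∉ T := fun h => hj (Finset.mem_insert_of_mem h)
    have step := W_move W f hf hf0 hsym haj xs (-xs a) y
    set xs' : Fin c → V :=
      Function.update (Function.update xs a (xs a + -xs a)) j (xs j - -xs a) with hxs'
    have hxs'eq : ∀ i, xs' i = if i = j then xs j + xs a else if i = a then 0 else xs i := by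
      intro i
      by_cases hij : i = j
      · rw [hij, if_pos rfl, hxs', Function.update_self, sub_neg_eq_add]
      · rw [if_neg hij]
        by_cases hia : i = a
        · rw [hia, if_pos rfl, hxs', Function.update_of_ne haj, Function.update_self,
            add_neg_cancel]
        · rw [if_neg hia, hxs', Function.update_of_ne hij, Function.update_of_ne hia]
    have hsumT : ∑ t ∈ T, xs' t = ∑ t ∈ T, xs t := by
      refine Finset.sum_congr rfl fun t ht => ?_
      have htj : t ≠ j := fun h => hjT (h ▸ ht)
      have hta : t ≠ a := fun h => ha (h ▸ ht)
      rw [hxs'eq t, if_neg htj, if_neg hta]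
    rw [step, ih hjT xs']
    congr 1
    funext i
    by_cases hiT : i ∈ T
    · have h2 : i ∈ insert a T := Finset.mem_insert_of_mem hiT
      rw [if_pos hiT, if_pos h2]
    · by_cases hij : i = j
      · have hni : i ∉ insert a T := by rw [hij]; exact hj
        rw [if_neg hiT, if_pos hij, if_neg hni, if_pos hij, hsumT, hxs'eq j, if_pos rfl,
          Finset.sum_insert ha]
        abel
      · by_cases hia : i = a
        · have hmem : i ∈ insert a T := by rw [hia]; exact Finset.mem_insert_self _ _
          rw [if_neg hiT, if_neg hij, if_pos hmem, hxs'eq i, if_neg hij, if_pos hia]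
        · have hnm : i ∉ insert a T := by simp [Finset.mem_insert, hia, hiT]
          rw [if_neg hiT, if_neg hij, if_neg hnm, if_neg hij, hxs'eq i, if_neg hij, if_neg hia]

lemma W_eq_of_sum_eq (hc : 0 < c)
    (hf : ∀ x x', f x ∘ f x' = f (x + x')) (hf0 : f 0 = id)
    (hsym : ∀ (x : V) (i : Fin c) (xs : Fin c → V) (y : 𝒴),
      W xs (f x y) = W (Function.update xs i (xs i + x)) y)
    (xs xs' : Fin c → V) (h : ∑ i, xs i = ∑ i, xs' i) (y : 𝒴) :
    W xs y = W xs' y := by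
  have hj : c - 1 < c := by omega
  set j : Fin c := ⟨c - 1, hj⟩ with hjdef
  have key : ∀ zs : Fin c → V, W zs y = W (fun i => if i = j then ∑ t, zs t else 0) y := by
    intro zs
    have h1 := W_collect W f hf hf0 hsym (Finset.univ.erase j) j (Finset.notMem_erase j _) zs y
    rw [h1]
    congr 1
    funext i
    by_cases hij : i = j
    · rw [hij, if_neg (Finset.notMem_erase j _), if_pos rfl, if_pos rfl,
        Finset.add_sum_erase _ _ (Finset.mem_univ j)]
    · rw [if_pos (Finset.mem_erase.mpr ⟨hij, Finset.mem_univ i⟩), if_neg hij]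
  rw [key xs, key xs', h]

end channel


/-- For a symmetric MAC `W` with i.i.d. uniform inputs `X₁,…,X_c` on `V = F^l`,
the output `Y` is conditionally independent of `(X₁,…,X_{c-1})` given the modulo sum
`S = X₁ + ⋯ + X_c`: the conditional mutual information `I(Y; X₁,…,X_{c-1} | S)`
of the induced joint distribution vanishes. -/
theorem symmetric_MAC_security
    {F : Type*} [Field F] [Fintype F] (l c : ℕ) (hc : 0 < c)
    {𝒴 : Type*} [Fintype 𝒴]
    (W : (Fin c → (Fin l → F)) → 𝒴 → ℝ)
    (hW0 : ∀ xs y, 0 ≤ W xs y) (hW1 : ∀ xs, ∑ y, W xs y = 1)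
    (f : (Fin l → F) → 𝒴 → 𝒴)
    (hf : ∀ x x', f x ∘ f x' = f (x + x')) (hf0 : f 0 = id)
    (hsym : ∀ (x : Fin l → F) (i : Fin c) (xs : Fin c → (Fin l → F)) (y : 𝒴),
      W xs (f x y) = W (Function.update xs i (xs i + x)) y) :
    condMI (fun yvs : 𝒴 × (Fin (c - 1) → (Fin l → F)) × (Fin l → F) =>
        ((Fintype.card (Fin l → F) : ℝ) ^ c)⁻¹ *
          W (fun i : Fin c => if h : (i : ℕ) < c - 1 then yvs.2.1 ⟨i, h⟩
              else yvs.2.2 - ∑ j, yvs.2.1 j)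
            yvs.1)
      = 0 := by
  obtain ⟨m, rfl⟩ : ∃ m, c = m + 1 := ⟨c - 1, by omega⟩
  show condMI (fun yvs : 𝒴 × (Fin m → (Fin l → F)) × (Fin l → F) =>
        ((Fintype.card (Fin l → F) : ℝ) ^ (m + 1))⁻¹ *
          W (fun i : Fin (m + 1) => if h : (i : ℕ) < m then yvs.2.1 ⟨(i : ℕ), h⟩
              else yvs.2.2 - ∑ j, yvs.2.1 j)
            yvs.1)
      = 0
  have hNpos : (0:ℝ) < (Fintype.card (Fin l → F) : ℝ) := by
    exact_mod_cast Fintype.card_pos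
  set q : 𝒴 × (Fin l → F) → ℝ := fun ys =>
    (Fintype.card (Fin l → F) : ℝ)⁻¹ *
      W (fun i : Fin (m + 1) => if i = Fin.last m then ys.2 else 0) ys.1 with hq
  have hq0 : ∀ x, 0 ≤ q x := fun x =>
    mul_nonneg (inv_nonneg.mpr hNpos.le) (hW0 _ _)
  have hp : (fun yvs : 𝒴 × (Fin m → (Fin l → F)) × (Fin l → F) =>
        ((Fintype.card (Fin l → F) : ℝ) ^ (m + 1))⁻¹ *
          W (fun i : Fin (m + 1) => if h : (i : ℕ) < m then yvs.2.1 ⟨(i : ℕ), h⟩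
              else yvs.2.2 - ∑ j, yvs.2.1 j)
            yvs.1)
      = fun yvs : 𝒴 × (Fin m → (Fin l → F)) × (Fin l → F) =>
        (Fintype.card (Fin m → (Fin l → F)) : ℝ)⁻¹ * q (yvs.1, yvs.2.2) := by
    funext yvs
    obtain ⟨y, v, s⟩ := yvs
    have hsum1 : ∑ i : Fin (m+1),
        (if h : (i : ℕ) < m then v ⟨(i : ℕ), h⟩ else s - ∑ j, v j) = s := by
      rw [Fin.sum_univ_castSucc]
      have h1 : ∀ i : Fin m,
          (if h : ((Fin.castSucc i : Fin (m+1)) : ℕ) < m then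
              v ⟨((Fin.castSucc i : Fin (m+1)) : ℕ), h⟩
            else s - ∑ j, v j) = v i := by
        intro i
        rw [dif_pos (by exact i.isLt)]
        exact congrArg v (by ext; simp)
      rw [Finset.sum_congr rfl fun i _ => h1 i,
        dif_neg (by simp [Fin.val_last])]
      abel
    have hsum2 : ∑ i : Fin (m+1), (if i = Fin.last m then s else 0) = s := by
      simp
    have hWeq := W_eq_of_sum_eq W f (by omega) hf hf0 hsym
      (fun i : Fin (m+1) => if h : (i : ℕ) < m then v ⟨(i : ℕ), h⟩ else s - ∑ j, v j)
      (fun i => if i = Fin.last m then s else 0) (by rw [hsum1, hsum2]) y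
    rw [hWeq, hq]
    have hcard : (Fintype.card (Fin m → (Fin l → F)) : ℝ)
        = (Fintype.card (Fin l → F) : ℝ) ^ m := by
      rw [Fintype.card_fun]; push_cast; simp
    rw [hcard, pow_succ, mul_inv]
    ring
  rw [hp]
  exact condMI_indep q hq0
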